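/- Let A = {0, a₁, a₂} and B = {0, b₁, b₂} with 0 < a₁ < a₂, 0 < b₁ < b₂, and a₁ ≤ b₁. If the sumset A + B has exactly 9 elements (all nine pairwise sums are distinct), then A + B uniquely determines the pair {A, B}: if U = {0, u₁, u₂}, V = {0, v₁, v₂} with 0 < u₁ < u₂, 0 < v₁ < v₂, u₁ ≤ v₁, |U + V| = 9, and U + V = A + B, then {U, V} = {A, B}. -/

import Mathlib

open Finset Pointwise

lemma nodup_of_card {α : Type*} [DecidableEq α] (l : List α) (h : l.toFinset.card = l.length) :
    l.Nodup := by
  have := Multiset.toFinset_card_eq_card_iff_nodup (m := (l : Multiset α))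
  simp only [Multiset.coe_card, Multiset.coe_nodup] at this
  exact this.mp h

lemma sumset_expand (a₁ a₂ b₁ b₂ : ℤ) : ({0, a₁, a₂} : Finset ℤ) + ({0, b₁, b₂} : Finset ℤ) =
    ([0, a₁, a₂, b₁, a₁+b₁, a₂+b₁, b₂, a₁+b₂, a₂+b₂] : List ℤ).toFinset := by
  simp only [Finset.insert_eq, Finset.union_add, Finset.add_union, Finset.singleton_add_singleton]
  ext x
  simp only [Finset.mem_union, Finset.mem_singleton, List.mem_toFinset, List.mem_cons, List.not_mem_nil]
  simp
  tauto

theorem key (a₁ a₂ b₁ b₂ u₁ u₂ v₁ v₂ : ℤ)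
    (ha : 0 < a₁) (ha' : a₁ < a₂) (hb : 0 < b₁) (hb' : b₁ < b₂) (hab : a₁ ≤ b₁)
    (hu : 0 < u₁) (hu' : u₁ < u₂) (hv : 0 < v₁) (hv' : v₁ < v₂) (huv : u₁ ≤ v₁)
    (hA9 : ((({0, a₁, a₂} : Finset ℤ) + ({0, b₁, b₂} : Finset ℤ)).card = 9))
    (hU9 : ((({0, u₁, u₂} : Finset ℤ) + ({0, v₁, v₂} : Finset ℤ)).card = 9))
    (heq : ({0, u₁, u₂} : Finset ℤ) + ({0, v₁, v₂} : Finset ℤ) =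
           ({0, a₁, a₂} : Finset ℤ) + ({0, b₁, b₂} : Finset ℤ)) :
    u₁ = a₁ ∧ u₂ = a₂ ∧ v₁ = b₁ ∧ v₂ = b₂ := by
  rw [sumset_expand] at hA9 hU9
  rw [sumset_expand a₁, sumset_expand u₁] at heq
  have hndA := nodup_of_card _ hA9
  have hndU := nodup_of_card _ hU9
  clear hA9 hU9
  have hsum : (([0, u₁, u₂, v₁, u₁+v₁, u₂+v₁, v₂, u₁+v₂, u₂+v₂] : List ℤ).toFinset).sum id =
      (([0, a₁, a₂, b₁, a₁+b₁, a₂+b₁, b₂, a₁+b₂, a₂+b₂] : List ℤ).toFinset).sum id := by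
    rw [heq]
  rw [List.sum_toFinset _ hndU, List.sum_toFinset _ hndA] at hsum
  simp only [List.map_cons, List.map_nil, List.sum_cons, List.sum_nil, id] at hsum
  simp only [List.nodup_cons, List.mem_cons, List.not_mem_nil, or_false, List.mem_singleton,
    not_or, List.nodup_nil, and_true] at hndA hndU
  have hm : ∀ x : ℤ, x ∈ ([0, u₁, u₂, v₁, u₁+v₁, u₂+v₁, v₂, u₁+v₂, u₂+v₂] : List ℤ).toFinset ↔
      x ∈ ([0, a₁, a₂, b₁, a₁+b₁, a₂+b₁, b₂, a₁+b₂, a₂+b₂] : List ℤ).toFinset := by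
    rw [heq]; intro; rfl
  simp only [List.toFinset_cons, List.toFinset_nil, Finset.mem_insert, Finset.mem_singleton,
    LawfulSingleton.insert_empty_eq] at hm
  clear heq
  have m1 := (hm u₁).mp (by simp)
  have n1 := (hm a₁).mpr (by simp)
  obtain rfl : a₁ = u₁ := by omega
  clear m1 n1
  have mt := (hm (u₂+v₂)).mp (by simp)
  have nt := (hm (a₂+b₂)).mpr (by simp)
  have e2 : u₂ + v₂ = a₂ + b₂ := by omega
  clear mt nt
  obtain rfl : b₁ = v₁ := by omega
  clear hsum
  have m2 := (hm u₂).mp (by simp)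
  have m2' : u₂ = a₂ ∨ u₂ = a₂+b₁ ∨ u₂ = b₂ ∨ u₂ = a₁+b₂ := by omega
  clear m2
  have m4 := (hm v₂).mp (by simp)
  have m4' : v₂ = a₂ ∨ v₂ = a₂+b₁ ∨ v₂ = b₂ ∨ v₂ = a₁+b₂ := by omega
  clear m4
  have n5 := (hm (a₂+b₁)).mpr (by simp)
  refine ⟨rfl, ?_, rfl, ?_⟩ <;>
    rcases m2' with h|h|h|h <;> rcases m4' with h'|h'|h'|h' <;> omega

theorem sumset_nine_determines (a₁ a₂ b₁ b₂ u₁ u₂ v₁ v₂ : ℤ)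
    (ha : 0 < a₁) (ha' : a₁ < a₂) (hb : 0 < b₁) (hb' : b₁ < b₂) (hab : a₁ ≤ b₁)
    (hu : 0 < u₁) (hu' : u₁ < u₂) (hv : 0 < v₁) (hv' : v₁ < v₂) (huv : u₁ ≤ v₁)
    (hA9 : ((({0, a₁, a₂} : Finset ℤ) + ({0, b₁, b₂} : Finset ℤ)).card = 9))
    (hU9 : ((({0, u₁, u₂} : Finset ℤ) + ({0, v₁, v₂} : Finset ℤ)).card = 9))
    (heq : ({0, u₁, u₂} : Finset ℤ) + ({0, v₁, v₂} : Finset ℤ) =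
           ({0, a₁, a₂} : Finset ℤ) + ({0, b₁, b₂} : Finset ℤ)) :
    ({({0, u₁, u₂} : Finset ℤ), ({0, v₁, v₂} : Finset ℤ)} : Finset (Finset ℤ)) =
    {({0, a₁, a₂} : Finset ℤ), ({0, b₁, b₂} : Finset ℤ)} := by
  obtain ⟨rfl, rfl, rfl, rfl⟩ := key a₁ a₂ b₁ b₂ u₁ u₂ v₁ v₂ ha ha' hb hb' hab hu hu' hv hv' huv
    hA9 hU9 heq
  rfl
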